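/- Let G be a graph, U ⊆ V(G), and k = mvc_U(G). Let S_i and S_j be two vertex covers of G of size k containing U, with T = S_i ∩ S_j, A = S_i \ T, B = S_j \ T, and H = G[A ∪ B] the bipartite graph with parts A, B. Then H has a perfect matching. -/

import Mathlib

namespace EVC

open SimpleGraph

variable {V : Type*}

/-- `S` is a vertex cover of `G`. -/
def IsVC (G : SimpleGraph V) (S : Set V) : Prop :=
  ∀ ⦃u v : V⦄, G.Adj u v → u ∈ S ∨ v ∈ S

/-- The minimum vertex cover number of `G`. -/
noncomputable def mvc (G : SimpleGraph V) : ℕ :=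
  sInf {k | ∃ S : Set V, IsVC G S ∧ S.ncard = k}

/-- The minimum size of a vertex cover of `G` containing all vertices of `U`. -/
noncomputable def mvcOn (G : SimpleGraph V) (U : Set V) : ℕ :=
  sInf {k | ∃ S : Set V, IsVC G S ∧ U ⊆ S ∧ S.ncard = k}

/-- Configuration `S'` is obtained from configuration `S` by a legal move of the guards
defending an attack on the edge `uv`: each guard stays or moves to an adjacent vertex
(at most one guard per vertex), and some guard moves across the attacked edge `uv`. -/
def Defends (G : SimpleGraph V) (S S' : Set V) (u v : V) : Prop :=
  ∃ f : V → V, Set.BijOn f S S' ∧ (∀ w ∈ S, f w = w ∨ G.Adj w (f w)) ∧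
    ((u ∈ S ∧ f u = v) ∨ (v ∈ S ∧ f v = u))

/-- `C` is an eternal vertex cover class of `G` with `k` guards, each configuration being a
vertex cover of size `k` containing `U`: from each configuration, every attack on an edge
can be defended by a legal move to another configuration in `C`. -/
def IsEvcClassOn (G : SimpleGraph V) (U : Set V) (k : ℕ) (C : Set (Set V)) : Prop :=
  C.Nonempty ∧ (∀ S ∈ C, IsVC G S ∧ U ⊆ S ∧ S.ncard = k) ∧
    ∀ S ∈ C, ∀ u v : V, G.Adj u v → ∃ S' ∈ C, Defends G S S' u v

/-- An eternal vertex cover class with no constraint on occupied vertices. -/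
def IsEvcClass (G : SimpleGraph V) (k : ℕ) (C : Set (Set V)) : Prop :=
  IsEvcClassOn G ∅ k C

/-- `evc_U(G)` : the minimum `k` admitting an eternal vertex cover class all of whose
configurations contain `U`. -/
noncomputable def evcOn (G : SimpleGraph V) (U : Set V) : ℕ :=
  sInf {k | ∃ C : Set (Set V), IsEvcClassOn G U k C}

/-- The eternal vertex cover number of `G`. -/
noncomputable def evc (G : SimpleGraph V) : ℕ := evcOn G ∅

/-- `x` is a cut vertex of the connected graph `G`. -/
def IsCutVertex (G : SimpleGraph V) (x : V) : Prop :=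
  G.Connected ∧ ¬ (G.induce {v : V | v ≠ x}).Connected

/-- The set of cut vertices of `G`. -/
def cutVertices (G : SimpleGraph V) : Set V := {x | IsCutVertex G x}

/-- `G` is locally connected: every open neighborhood induces a connected subgraph. -/
def LocallyConnected (G : SimpleGraph V) : Prop :=
  ∀ v : V, (G.induce (G.neighborSet v)).Connected

end EVC

open EVC SimpleGraph

private lemma hall_step {V : Type*} [Finite V] (G : SimpleGraph V) (U Si Sj : Set V)
    (hi : IsVC G Si) (hUi : U ⊆ Si) (hki : Si.ncard = mvcOn G U)
    (hj : IsVC G Sj) (hUj : U ⊆ Sj) :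
    ∃ f : ↥(Si \ Sj) → V, Function.Injective f ∧
      ∀ a : ↥(Si \ Sj), f a ∈ Sj \ Si ∧ G.Adj a.val (f a) := by
  classical
  set A := Si \ Sj with hA
  set B := Sj \ Si with hB
  let t : ↥A → Finset V := fun a => (Set.toFinite {b | b ∈ B ∧ G.Adj a.val b}).toFinset
  have ht : ∀ a b, b ∈ t a ↔ b ∈ B ∧ G.Adj a.val b := by
    intro a b; simp [t]
  have hall : ∀ s : Finset ↥A, s.card ≤ (s.biUnion t).card := by
    intro s
    set sV : Set V := Subtype.val '' (↑s : Set ↥A) with hsV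
    set N : Set V := ↑(s.biUnion t) with hN
    have hsub : sV ⊆ A := by rintro x ⟨a, _, rfl⟩; exact a.2
    have hsVSi : sV ⊆ Si := fun x hx => (hsub hx).1
    set S' : Set V := (Si \ sV) ∪ N with hS'
    have hVC : IsVC G S' := by
      have key : ∀ u v, G.Adj u v → u ∈ Si → u ∈ S' ∨ v ∈ S' := by
        intro u v huv hu
        by_cases hus : u ∈ sV
        · have huA : u ∈ A := hsub hus
          by_cases hvSi : v ∈ Si
          · have hvSj : v ∈ Sj := (hj huv).resolve_left (fun h => huA.2 h)
            have hvs : v ∉ sV := fun h => (hsub h).2 hvSj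
            exact Or.inr (Or.inl ⟨hvSi, hvs⟩)
          · have hvSj : v ∈ Sj := (hj huv).resolve_left (fun h => huA.2 h)
            obtain ⟨a, has, rfl⟩ := hus
            refine Or.inr (Or.inr ?_)
            exact Finset.mem_coe.mpr (Finset.mem_biUnion.mpr
              ⟨a, has, (ht a v).mpr ⟨⟨hvSj, hvSi⟩, huv⟩⟩)
        · exact Or.inl (Or.inl ⟨hu, hus⟩)
      intro u v huv
      rcases hi huv with hu | hv
      · exact key u v huv hu
      · exact (key v u huv.symm hv).symm
    have hU : U ⊆ S' := fun x hx =>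
      Or.inl ⟨hUi hx, fun hs => (hsub hs).2 (hUj hx)⟩
    have h1 : mvcOn G U ≤ S'.ncard := Nat.sInf_le ⟨S', hVC, hU, rfl⟩
    have h2 : S'.ncard ≤ (Si \ sV).ncard + N.ncard := Set.ncard_union_le _ _
    have h3 : (Si \ sV).ncard = Si.ncard - sV.ncard :=
      Set.ncard_diff hsVSi (Set.toFinite _)
    have h4 : sV.ncard = s.card := by
      rw [hsV, Set.ncard_image_of_injective _ Subtype.val_injective,
        Set.ncard_coe_finset]
    have h5 : N.ncard = (s.biUnion t).card := Set.ncard_coe_finset _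
    have h6 : s.card ≤ Si.ncard := by
      rw [← h4]; exact Set.ncard_le_ncard hsVSi (Set.toFinite _)
    omega
  obtain ⟨f, hfinj, hf⟩ :=
    (Finset.all_card_le_biUnion_card_iff_exists_injective t).mp hall
  exact ⟨f, hfinj, fun a => (ht a (f a)).mp (hf a)⟩

theorem symmDiff_has_perfect_matching {V : Type*} [Finite V] (G : SimpleGraph V)
    (U : Set V) (Si Sj : Set V)
    (hi : IsVC G Si) (hUi : U ⊆ Si) (hki : Si.ncard = mvcOn G U)
    (hj : IsVC G Sj) (hUj : U ⊆ Sj) (hkj : Sj.ncard = mvcOn G U) :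
    ∃ M : (G.induce ((Si \ Sj) ∪ (Sj \ Si))).Subgraph, M.IsPerfectMatching := by
  classical
  haveI := Fintype.ofFinite V
  obtain ⟨f, hfinj, hf⟩ := hall_step G U Si Sj hi hUi hki hj hUj
  obtain ⟨g, hginj, hg⟩ := hall_step G U Sj Si hj hUj hkj hi hUi
  let φ : ↥(Si \ Sj) → ↥(Sj \ Si) := fun a => ⟨f a, (hf a).1⟩
  let ψ : ↥(Sj \ Si) → ↥(Si \ Sj) := fun b => ⟨g b, (hg b).1⟩
  have hφinj : Function.Injective φ := fun a a' h =>
    hfinj (congrArg Subtype.val h)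
  have hψinj : Function.Injective ψ := fun b b' h =>
    hginj (congrArg Subtype.val h)
  have hcard : Fintype.card ↥(Si \ Sj) = Fintype.card ↥(Sj \ Si) :=
    le_antisymm (Fintype.card_le_of_injective φ hφinj)
      (Fintype.card_le_of_injective ψ hψinj)
  have hφbij : Function.Bijective φ :=
    (Fintype.bijective_iff_injective_and_card φ).mpr ⟨hφinj, hcard⟩
  refine ⟨{
    verts := Set.univ
    Adj := fun x y => ∃ a : ↥(Si \ Sj),
      (x.val = a.val ∧ y.val = (φ a).val) ∨ (y.val = a.val ∧ x.val = (φ a).val)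
    adj_sub := by
      rintro x y ⟨a, ⟨hx, hy⟩ | ⟨hy, hx⟩⟩
      · show G.Adj x.val y.val
        rw [hx, hy]; exact (hf a).2
      · show G.Adj x.val y.val
        rw [hx, hy]; exact (hf a).2.symm
    edge_vert := fun _ => Set.mem_univ _
    symm := by
      constructor
      rintro x y ⟨a, h | h⟩
      · exact ⟨a, Or.inr h⟩
      · exact ⟨a, Or.inl h⟩ }, ?_⟩
  rw [Subgraph.isPerfectMatching_iff]
  intro v
  rcases v.2 with hvA | hvB
  · let a : ↥(Si \ Sj) := ⟨v.val, hvA⟩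
    refine ⟨⟨(φ a).val, Or.inr (φ a).2⟩, ⟨a, Or.inl ⟨rfl, rfl⟩⟩, ?_⟩
    rintro y ⟨a', ⟨h1, h2⟩ | ⟨h1, h2⟩⟩
    · have : a' = a := Subtype.ext h1.symm
      subst this
      exact Subtype.ext h2
    · exact absurd (φ a').2.1 (by rw [← h2]; exact hvA.2)
  · obtain ⟨a, ha⟩ := hφbij.2 ⟨v.val, hvB⟩
    have hva : v.val = (φ a).val := by rw [ha]
    refine ⟨⟨a.val, Or.inl a.2⟩, ⟨a, Or.inr ⟨rfl, hva⟩⟩, ?_⟩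
    rintro y ⟨a', ⟨h1, h2⟩ | ⟨h1, h2⟩⟩
    · exact absurd a'.2.1 (by rw [← h1]; exact hvB.2)
    · have : a' = a := hφinj (Subtype.ext (h2.symm.trans hva).symm).symm
      subst this
      exact Subtype.ext h1
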